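/- Let [X_{n,j}]_{n≥1, j=1,…,M} be an array of random variables with values in a Polish space that is partially exchangeable in the sense of de Finetti, with law P and directing random measures (F̃_1,…,F̃_M). Fix j and let V = (X_{n,i})_{n≥1, i≠j} collect all observations from the other sequences. Then, with P-probability one, as n→∞ the conditional distribution P(X_{n+1,j} ∈ · | X_{1,j},…,X_{n,j}, V) converges weakly to F̃_j(·), and also P(X_{n+1,j} ∈ · | (X_{k,i})_{k≤n, i=1,…,M}) converges weakly to F̃_j(·). -/

import Mathlib

open MeasureTheory ProbabilityTheory Filter Topology
open scoped ENNReal NNReal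

/-- A family of sequences `[X_{n,j}]` (columns indexed by `J`) is partially exchangeable in the
sense of de Finetti if its joint law is invariant under separate finite permutations within each
column. -/
def PartiallyExchangeable {Ω 𝕏 J : Type*} [MeasurableSpace Ω] [MeasurableSpace 𝕏]
    (μ : Measure Ω) (X : ℕ → J → Ω → 𝕏) : Prop :=
  ∀ σ : J → Equiv.Perm ℕ, (∀ j, {n | σ j n ≠ n}.Finite) →
    Measure.map (fun ω (p : ℕ × J) => X (σ p.2 p.1) p.2 ω) μ
      = Measure.map (fun ω (p : ℕ × J) => X p.1 p.2 ω) μ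

/-- The empirical distribution `F̂_n = (1/n) ∑_{i=1}^n δ_{X_i}`. -/
noncomputable def empMeas {Ω 𝕏 : Type*} [MeasurableSpace Ω] [MeasurableSpace 𝕏]
    (X : ℕ → Ω → 𝕏) (n : ℕ) (ω : Ω) : Measure 𝕏 :=
  (n : ℝ≥0∞)⁻¹ • ∑ i ∈ Finset.range n, Measure.dirac (X i ω)

/-- Weak convergence of a sequence of measures, phrased via integrals of bounded continuous
functions. -/
def TendstoWeakly {𝕏 : Type*} [MeasurableSpace 𝕏] [TopologicalSpace 𝕏]
    (ν : ℕ → Measure 𝕏) (ρ : Measure 𝕏) : Prop :=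
  ∀ f : BoundedContinuousFunction 𝕏 ℝ,
    Tendsto (fun n => ∫ x, f x ∂(ν n)) atTop (𝓝 (∫ x, f x ∂ρ))

section Helpers

lemma integral_empMeas {Ω 𝕏 : Type*} [MeasurableSpace Ω] [MeasurableSpace 𝕏] [TopologicalSpace 𝕏]
    [OpensMeasurableSpace 𝕏] (Y : ℕ → Ω → 𝕏) (n : ℕ) (ω : Ω)
    (f : BoundedContinuousFunction 𝕏 ℝ) :
    ∫ x, f x ∂(empMeas Y n ω) = (n : ℝ)⁻¹ * ∑ i ∈ Finset.range n, f (Y i ω) := by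
  rcases Nat.eq_zero_or_pos n with h|h
  · subst h; simp [empMeas]
  · rw [empMeas, integral_smul_measure, integral_finset_sum_measure
      (fun i _ => f.integrable _)]
    simp only [ENNReal.toReal_inv, ENNReal.toReal_natCast, smul_eq_mul]
    congr 1
    exact Finset.sum_congr rfl fun i _ => integral_dirac' _ _ f.continuous.stronglyMeasurable

lemma cesaro_shift {a : ℕ → ℝ} {L : ℝ}
    (h : Tendsto (fun n : ℕ => (n : ℝ)⁻¹ * ∑ i ∈ Finset.range n, a i) atTop (𝓝 L)) (n : ℕ) :
    Tendsto (fun k : ℕ => ((k : ℝ))⁻¹ * ∑ i ∈ Finset.range k, a (n + i)) atTop (𝓝 L) := by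
  set A : ℕ → ℝ := fun m => (m : ℝ)⁻¹ * ∑ i ∈ Finset.range m, a i with hA
  set Sn : ℝ := ∑ i ∈ Finset.range n, a i with hSn
  have hinv : Tendsto (fun k : ℕ => (k : ℝ)⁻¹) atTop (𝓝 0) :=
    tendsto_inv_atTop_nhds_zero_nat
  have hAnk : Tendsto (fun k : ℕ => A (n + k)) atTop (𝓝 L) := by
    have := h.comp (tendsto_add_atTop_nat n)
    exact this.congr fun k => by show A (k + n) = A (n + k); rw [Nat.add_comm]
  have h1 : Tendsto (fun k : ℕ => ((n : ℝ) * (k : ℝ)⁻¹ + 1) * A (n + k) - (k : ℝ)⁻¹ * Sn)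
      atTop (𝓝 (((n : ℝ) * 0 + 1) * L - 0 * Sn)) :=
    ((((hinv.const_mul _).add_const 1).mul hAnk).sub (hinv.mul_const Sn))
  simp only [mul_zero, zero_add, one_mul, zero_mul, sub_zero] at h1
  refine h1.congr' ?_
  filter_upwards [eventually_ge_atTop 1] with k hk
  have hk0 : (k : ℝ) ≠ 0 := Nat.cast_ne_zero.mpr (by omega)
  have hnk0 : ((n + k : ℕ) : ℝ) ≠ 0 := Nat.cast_ne_zero.mpr (by omega)
  have hsum : ∑ i ∈ Finset.range (n + k), a i = Sn + ∑ i ∈ Finset.range k, a (n + i) := by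
    rw [hSn, Finset.sum_range_add]
  have : ((n : ℝ) * (k : ℝ)⁻¹ + 1) = (k : ℝ)⁻¹ * ((n + k : ℕ) : ℝ) := by
    push_cast; field_simp
  rw [this, hA]
  have h2 : (((n + k : ℕ) : ℝ))⁻¹ * ∑ i ∈ Finset.range (n + k), a i
      = (((n + k : ℕ) : ℝ))⁻¹ * (Sn + ∑ i ∈ Finset.range k, a (n + i)) := by rw [hsum]
  push_cast at h2 ⊢
  rw [h2]
  field_simp
  ring

lemma integrable_of_bound' {Ω : Type*} [MeasurableSpace Ω] {μ : Measure Ω} [IsFiniteMeasure μ]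
    {g : Ω → ℝ} (hg : AEStronglyMeasurable g μ) (C : ℝ) (h : ∀ ω, ‖g ω‖ ≤ C) :
    Integrable g μ :=
  ⟨hg, HasFiniteIntegral.of_bounded (ae_of_all _ h)⟩

lemma avg_norm_le {b : ℕ → ℝ} {C : ℝ} (hC : 0 ≤ C) (hb : ∀ i, ‖b i‖ ≤ C) (m : ℕ) :
    ‖(m : ℝ)⁻¹ * ∑ i ∈ Finset.range m, b i‖ ≤ C := by
  rcases Nat.eq_zero_or_pos m with h|h
  · simp [h, hC]
  · have h1 : ‖∑ i ∈ Finset.range m, b i‖ ≤ (m : ℝ) * C := by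
      calc ‖∑ i ∈ Finset.range m, b i‖ ≤ ∑ i ∈ Finset.range m, ‖b i‖ :=
            norm_sum_le _ _
        _ ≤ ∑ _i ∈ Finset.range m, C := Finset.sum_le_sum fun i _ => hb i
        _ = (m : ℝ) * C := by simp [mul_comm]
    have hm : (0:ℝ) < (m:ℝ) := by positivity
    rw [norm_mul, norm_inv, Real.norm_natCast]
    calc (m:ℝ)⁻¹ * ‖∑ i ∈ Finset.range m, b i‖ ≤ (m:ℝ)⁻¹ * ((m:ℝ) * C) := by
          apply mul_le_mul_of_nonneg_left h1 (by positivity)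
      _ = C := by field_simp

lemma master_convergence {Ω 𝕏 : Type*} {m0 : MeasurableSpace Ω} [MeasurableSpace 𝕏]
    [TopologicalSpace 𝕏] [OpensMeasurableSpace 𝕏]
    (μ : Measure Ω) [IsProbabilityMeasure μ]
    (Y : ℕ → Ω → 𝕏) (hY : ∀ n, Measurable (Y n))
    (ℱ : Filtration ℕ m0)
    (hYle : ∀ i, Measurable[⨆ n, ℱ n] (Y i))
    (f : BoundedContinuousFunction 𝕏 ℝ)
    (hswap : ∀ n m, n ≤ m →
      μ[(fun ω => f (Y m ω)) | ℱ n] =ᵐ[μ] μ[(fun ω => f (Y n ω)) | ℱ n])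
    (L : Ω → ℝ)
    (hL : ∀ᵐ ω ∂μ, Tendsto (fun n : ℕ => (n : ℝ)⁻¹ * ∑ i ∈ Finset.range n, f (Y i ω))
      atTop (𝓝 (L ω))) :
    ∀ᵐ ω ∂μ, Tendsto (fun n => (μ[(fun ω' => f (Y n ω')) | ℱ n]) ω) atTop (𝓝 (L ω)) := by
  classical
  set A : ℕ → Ω → ℝ := fun n ω => (n : ℝ)⁻¹ * ∑ i ∈ Finset.range n, f (Y i ω) with hAdef
  have hfb : ∀ (i : ℕ) (ω : Ω), ‖f (Y i ω)‖ ≤ ‖f‖ := fun i ω => f.norm_coe_le_norm _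
  have hAbdd : ∀ n ω, ‖A n ω‖ ≤ ‖f‖ := fun n ω =>
    avg_norm_le (norm_nonneg f) (fun i => hfb i ω) n
  -- the ⨆-measurable version of L
  set g' : Ω → ℝ := fun ω =>
    max (-‖f‖) (min ‖f‖ (Filter.limsup (fun n => ((A n ω : ℝ) : EReal)) atTop).toReal)
    with hg'def
  have hAmeas : ∀ n, Measurable[⨆ k, ℱ k] (A n) := by
    intro n
    exact (Finset.measurable_sum (Finset.range n)
      (fun i _ => f.continuous.measurable.comp (hYle i))).const_mul _
  have hg'meas : Measurable[⨆ k, ℱ k] g' := by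
    refine Measurable.max measurable_const (Measurable.min measurable_const ?_)
    exact measurable_ereal_toReal.comp
      (Measurable.limsup (fun n => measurable_coe_real_ereal.comp (hAmeas n)))
  have hsuple : (⨆ k, ℱ k) ≤ m0 := iSup_le fun k => ℱ.le k
  have hg'bdd : ∀ ω, ‖g' ω‖ ≤ ‖f‖ := by
    intro ω
    rw [Real.norm_eq_abs, abs_le]
    constructor
    · exact le_max_left _ _
    · exact max_le (neg_le_self (norm_nonneg f)) (min_le_left _ _)
  have hg'L : g' =ᵐ[μ] L := by
    filter_upwards [hL] with ω hω
    have hcoe : Tendsto (fun n => ((A n ω : ℝ) : EReal)) atTop (𝓝 ((L ω : ℝ) : EReal)) :=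
      (continuous_coe_real_ereal.tendsto _).comp hω
    have hlim : Filter.limsup (fun n => ((A n ω : ℝ) : EReal)) atTop = ((L ω : ℝ) : EReal) :=
      hcoe.limsup_eq
    have hLb : |L ω| ≤ ‖f‖ := by
      rw [abs_le]
      constructor
      · exact ge_of_tendsto hω (Eventually.of_forall fun n =>
          neg_le_of_abs_le (by simpa only [Real.norm_eq_abs] using hAbdd n ω))
      · exact le_of_tendsto hω (Eventually.of_forall fun n =>
          le_of_abs_le (by simpa only [Real.norm_eq_abs] using hAbdd n ω))
    simp only [hg'def, hlim, EReal.toReal_coe]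
    rw [min_eq_right (abs_le.mp hLb).2, max_eq_right (abs_le.mp hLb).1]
  have hg'int : Integrable g' μ :=
    integrable_of_bound' ((hg'meas.mono hsuple le_rfl).stronglyMeasurable.aestronglyMeasurable)
      ‖f‖ hg'bdd
  -- key step: for each n, μ[f (Y n) | ℱ n] = μ[g' | ℱ n] a.e.
  have hfYint : ∀ i : ℕ, Integrable (fun ω => f (Y i ω)) μ := fun i =>
    integrable_of_bound' ((f.continuous.measurable.comp (hY i)).aestronglyMeasurable) ‖f‖
      (fun ω => hfb i ω)
  have key : ∀ n : ℕ, μ[g' | ℱ n] =ᵐ[μ] μ[(fun ω => f (Y n ω)) | ℱ n] := by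
    intro n
    set fs : ℕ → Ω → ℝ := fun k ω =>
      (((k + 1 : ℕ)) : ℝ)⁻¹ * ∑ i ∈ Finset.range (k + 1), f (Y (n + i) ω) with hfsdef
    have hfs_int : ∀ k, Integrable (fs k) μ := by
      intro k
      refine integrable_of_bound' ?_ ‖f‖ (fun ω =>
        avg_norm_le (norm_nonneg f) (fun i => hfb (n + i) ω) (k+1))
      exact ((Finset.measurable_sum (Finset.range (k+1))
        (fun i _ => f.continuous.measurable.comp (hY (n + i)))).const_mul
          _).aestronglyMeasurable
    refine tendsto_condExp_unique fs (fun _ ω => f (Y n ω)) g' (fun ω => f (Y n ω))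
      hfs_int (fun _ => hfYint n) ?_ ?_ (fun _ => ‖f‖) (integrable_const _)
      (fun _ => ‖f‖) (integrable_const _) ?_ ?_ ?_
    · -- fs k → g' a.e.
      filter_upwards [hL, hg'L] with ω hω heq
      have h1 : Tendsto (fun k : ℕ => (k : ℝ)⁻¹ * ∑ i ∈ Finset.range k, f (Y (n + i) ω))
          atTop (𝓝 (L ω)) := cesaro_shift hω n
      have h2 := h1.comp (tendsto_add_atTop_nat 1)
      rw [heq]
      exact h2
    · exact Eventually.of_forall fun ω => tendsto_const_nhds
    · exact fun k => Eventually.of_forall fun ω =>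
        avg_norm_le (norm_nonneg f) (fun i => hfb (n + i) ω) (k+1)
    · exact fun k => Eventually.of_forall fun ω => hfb n ω
    · -- conditional expectations agree at each step
      intro k
      have hsum : μ[(fun ω => ∑ i ∈ Finset.range (k+1), f (Y (n + i) ω)) | ℱ n]
          =ᵐ[μ] fun ω => ∑ i ∈ Finset.range (k+1), (μ[(fun ω' => f (Y (n + i) ω')) | ℱ n]) ω := by
        have := condExp_finsetSum (μ := μ) (m := ℱ n) (s := Finset.range (k+1))
          (f := fun i ω => f (Y (n + i) ω)) (fun i _ => hfYint (n + i))
        refine (condExp_congr_ae ?_).trans (this.trans ?_)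
        · exact Eventually.of_forall fun ω => by simp
        · exact Eventually.of_forall fun ω => by simp
      have hsmul : μ[fs k | ℱ n]
          =ᵐ[μ] (((k + 1 : ℕ)) : ℝ)⁻¹ •
            μ[(fun ω => ∑ i ∈ Finset.range (k+1), f (Y (n + i) ω)) | ℱ n] := by
        have : fs k = (((k + 1 : ℕ)) : ℝ) ⁻¹ •
            (fun ω => ∑ i ∈ Finset.range (k+1), f (Y (n + i) ω)) := by
          funext ω; simp [hfsdef, smul_eq_mul]
        rw [this]
        exact condExp_smul _ _ _
      have hterm : ∀ i ∈ Finset.range (k+1),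
          μ[(fun ω' => f (Y (n + i) ω')) | ℱ n] =ᵐ[μ] μ[(fun ω' => f (Y n ω')) | ℱ n] :=
        fun i _ => hswap n (n + i) (Nat.le_add_right n i)
      have hsum2 : (fun ω => ∑ i ∈ Finset.range (k+1), (μ[(fun ω' => f (Y (n + i) ω')) | ℱ n]) ω)
          =ᵐ[μ] fun ω => ∑ i ∈ Finset.range (k+1), (μ[(fun ω' => f (Y n ω')) | ℱ n]) ω := by
        have h := (eventually_all_finset (l := ae μ) (Finset.range (k+1))
          (p := fun i ω =>
            (μ[(fun ω' => f (Y (n + i) ω')) | ℱ n]) ω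
              = (μ[(fun ω' => f (Y n ω')) | ℱ n]) ω)).mpr hterm
        filter_upwards [h] with ω hω
        exact Finset.sum_congr rfl fun i hi => hω i hi
      refine hsmul.trans ?_
      have : (((k + 1 : ℕ)) : ℝ)⁻¹ • μ[(fun ω => ∑ i ∈ Finset.range (k+1), f (Y (n + i) ω)) | ℱ n]
          =ᵐ[μ] fun ω => (((k + 1 : ℕ)) : ℝ)⁻¹ *
            ∑ i ∈ Finset.range (k+1), (μ[(fun ω' => f (Y n ω')) | ℱ n]) ω := by
        filter_upwards [hsum, hsum2] with ω h1 h2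
        simp only [Pi.smul_apply, smul_eq_mul, h1, h2]
      refine this.trans ?_
      refine Eventually.of_forall fun ω => ?_
      have hk1 : (((k+1 : ℕ)) : ℝ) ≠ 0 := by positivity
      simp only [Finset.sum_const, Finset.card_range, nsmul_eq_mul]
      field_simp
  -- Lévy's upward theorem
  haveI : SigmaFiniteFiltration μ ℱ := inferInstance
  have levy : ∀ᵐ ω ∂μ, Tendsto (fun n => (μ[g' | ℱ n]) ω) atTop (𝓝 (g' ω)) :=
    hg'int.tendsto_ae_condExp hg'meas.stronglyMeasurable
  filter_upwards [ae_all_iff.mpr key, levy, hg'L] with ω hkey hlevy heq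
  have : (fun n => (μ[(fun ω' => f (Y n ω')) | ℱ n]) ω) = fun n => (μ[g' | ℱ n]) ω := by
    funext n; exact (hkey n).symm
  rw [this, ← heq]
  exact hlevy

lemma integrable_of_bound {Ω : Type*} [MeasurableSpace Ω] {μ : Measure Ω} [IsFiniteMeasure μ]
    {g : Ω → ℝ} (hg : AEStronglyMeasurable g μ) (C : ℝ) (h : ∀ ω, ‖g ω‖ ≤ C) :
    Integrable g μ :=
  ⟨hg, HasFiniteIntegral.of_bounded (ae_of_all _ h)⟩

lemma condexp_comp_eq_of_map_eq {Ω 𝕏 γ : Type*} [MeasurableSpace Ω] [MeasurableSpace 𝕏]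
    [TopologicalSpace 𝕏] [OpensMeasurableSpace 𝕏] [SecondCountableTopology 𝕏]
    [MeasurableSpace γ]
    (μ : Measure Ω) [IsProbabilityMeasure μ]
    (Z : Ω → γ) (hZ : Measurable Z) (Y Y' : Ω → 𝕏) (hY : Measurable Y) (hY' : Measurable Y')
    (hlaw : Measure.map (fun ω => (Z ω, Y ω)) μ = Measure.map (fun ω => (Z ω, Y' ω)) μ)
    (f : BoundedContinuousFunction 𝕏 ℝ) :
    μ[(fun ω => f (Y ω)) | MeasurableSpace.comap Z inferInstance]
      =ᵐ[μ] μ[(fun ω => f (Y' ω)) | MeasurableSpace.comap Z inferInstance] := by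
  have hm : MeasurableSpace.comap Z inferInstance ≤ _ := hZ.comap_le
  have hfY : Integrable (fun ω => f (Y ω)) μ :=
    integrable_of_bound ((f.continuous.measurable.comp hY).aestronglyMeasurable) ‖f‖
      (fun ω => f.norm_coe_le_norm _)
  have hfY' : Integrable (fun ω => f (Y' ω)) μ :=
    integrable_of_bound ((f.continuous.measurable.comp hY').aestronglyMeasurable) ‖f‖
      (fun ω => f.norm_coe_le_norm _)
  refine ae_eq_condExp_of_forall_setIntegral_eq hm hfY'
    (fun s _ _ => integrable_condExp.integrableOn) (fun s hs _ => ?_)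
    stronglyMeasurable_condExp.aestronglyMeasurable
  obtain ⟨B, hB, rfl⟩ := hs
  rw [setIntegral_condExp hm hfY ⟨B, hB, rfl⟩]
  have hg : AEStronglyMeasurable (fun p : γ × 𝕏 => f p.2) (Measure.map (fun ω => (Z ω, Y ω)) μ) :=
    (f.continuous.measurable.comp measurable_snd).stronglyMeasurable.aestronglyMeasurable
  have hg' : AEStronglyMeasurable (fun p : γ × 𝕏 => f p.2)
      (Measure.map (fun ω => (Z ω, Y' ω)) μ) :=
    (f.continuous.measurable.comp measurable_snd).stronglyMeasurable.aestronglyMeasurable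
  have hpre : ∀ W : Ω → 𝕏, (fun ω => (Z ω, W ω)) ⁻¹' (B ×ˢ Set.univ) = Z ⁻¹' B := by
    intro W; ext ω; simp
  calc ∫ ω in Z ⁻¹' B, f (Y ω) ∂μ
      = ∫ p in B ×ˢ Set.univ, f p.2 ∂(Measure.map (fun ω => (Z ω, Y ω)) μ) := by
        rw [setIntegral_map (hB.prod MeasurableSet.univ) hg
          ((hZ.prodMk hY).aemeasurable), hpre]
    _ = ∫ p in B ×ˢ Set.univ, f p.2 ∂(Measure.map (fun ω => (Z ω, Y' ω)) μ) := by rw [hlaw]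
    _ = ∫ ω in Z ⁻¹' B, f (Y' ω) ∂μ := by
        rw [setIntegral_map (hB.prod MeasurableSet.univ) hg'
          ((hZ.prodMk hY').aemeasurable), hpre]

end Helpers

/-- **Predictive convergence for partially exchangeable arrays.**
For a partially exchangeable array with directing random measures `(F̃_j)`, the predictive
distribution of the next observation in column `j` — given the past observations in column `j`
together with all the observations `V` in the other columns, or given all the observations up to
time `n` in all columns — converges a.s. weakly to `F̃_j`. Conditional distributions are
identified through conditional expectations of bounded continuous functions. -/
theorem statement10
    {Ω 𝕏 J : Type*} [MeasurableSpace Ω] [MeasurableSpace 𝕏] [TopologicalSpace 𝕏]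
    [PolishSpace 𝕏] [BorelSpace 𝕏] [Countable J]
    (μ : Measure Ω) [IsProbabilityMeasure μ]
    (X : ℕ → J → Ω → 𝕏) (hX : ∀ n j, Measurable (X n j))
    (hpe : PartiallyExchangeable μ X)
    -- the directing random measures
    (F : J → Ω → Measure 𝕏)
    (hFmeas : ∀ j, Measurable (F j))
    (hFprob : ∀ j ω, IsProbabilityMeasure (F j ω))
    (hFlim : ∀ᵐ ω ∂μ, ∀ j, TendstoWeakly (fun n => empMeas (fun i => X i j) n ω) (F j ω))
    (j : J)
    -- the σ-field generated by `X_{1,j},…,X_{n,j}` and all the other columns `V`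
    (𝔊 : ℕ → MeasurableSpace Ω)
    (h𝔊 : ∀ n, 𝔊 n = MeasurableSpace.comap
      (fun ω => ((fun i : Fin n => X i j ω),
        (fun p : ℕ × {i : J // i ≠ j} => X p.1 p.2 ω))) inferInstance)
    -- the σ-field generated by all the observations `(X_{k,i})_{k ≤ n, i = 1,…,M}`
    (ℌ : ℕ → MeasurableSpace Ω)
    (hℌ : ∀ n, ℌ n = MeasurableSpace.comap
      (fun ω => fun p : Fin n × J => X p.1 p.2 ω) inferInstance) :
    ∀ f : BoundedContinuousFunction 𝕏 ℝ,
      (∀ᵐ ω ∂μ,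
        Tendsto (fun n => (μ[fun ω' => f (X n j ω') | 𝔊 n]) ω)
          atTop (𝓝 (∫ x, f x ∂(F j ω)))) ∧
      (∀ᵐ ω ∂μ,
        Tendsto (fun n => (μ[fun ω' => f (X n j ω') | ℌ n]) ω)
          atTop (𝓝 (∫ x, f x ∂(F j ω)))) := by
  classical
  intro f
  -- a.e. convergence of empirical averages in column j
  have hL : ∀ᵐ ω ∂μ, Tendsto (fun n : ℕ => (n : ℝ)⁻¹ * ∑ i ∈ Finset.range n, f (X i j ω))
      atTop (𝓝 (∫ x, f x ∂(F j ω))) := by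
    filter_upwards [hFlim] with ω hω
    exact (hω j f).congr fun n => integral_empMeas (fun i => X i j) n ω f
  -- the swap permutation
  have hσfin : ∀ n m : ℕ, ∀ i : J,
      {k | (if i = j then Equiv.swap n m else 1 : Equiv.Perm ℕ) k ≠ k}.Finite := by
    intro n m i
    by_cases hij : i = j
    · refine (Set.toFinite ({n, m} : Set ℕ)).subset ?_
      intro k hk
      simp only [hij, if_pos rfl, Set.mem_setOf_eq] at hk
      by_contra hkk
      simp only [Set.mem_insert_iff, Set.mem_singleton_iff, not_or] at hkk
      exact hk (Equiv.swap_apply_of_ne_of_ne hkk.1 hkk.2)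
    · simp [hij]
  constructor
  · ------------------------------------------------------------------ 𝔊 part
    have hGle : ∀ n, 𝔊 n ≤ ‹MeasurableSpace Ω› := by
      intro n
      rw [h𝔊 n]
      exact Measurable.comap_le (Measurable.prodMk
        (measurable_pi_lambda _ fun i => hX i j)
        (measurable_pi_lambda _ fun p => hX p.1 p.2))
    have hGmono : Monotone 𝔊 := by
      refine monotone_nat_of_le_succ fun n => ?_
      rw [h𝔊 n, h𝔊 (n+1)]
      set φ : ((Fin (n+1) → 𝕏) × (ℕ × {i : J // i ≠ j} → 𝕏)) →
          ((Fin n → 𝕏) × (ℕ × {i : J // i ≠ j} → 𝕏)) :=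
        fun q => ((fun i : Fin n => q.1 i.castSucc), q.2) with hφdef
      have hφ : Measurable φ := Measurable.prodMk
        (measurable_pi_lambda _ fun i => (measurable_pi_apply _).comp measurable_fst)
        measurable_snd
      have hcomp : (fun ω => ((fun i : Fin n => X i j ω),
          (fun p : ℕ × {i : J // i ≠ j} => X p.1 p.2 ω)))
          = φ ∘ (fun ω => ((fun i : Fin (n+1) => X i j ω),
            (fun p : ℕ × {i : J // i ≠ j} => X p.1 p.2 ω))) := by
        funext ω
        simp only [hφdef, Function.comp_apply, Fin.coe_castSucc]
      rw [hcomp, ← MeasurableSpace.comap_comp]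
      exact MeasurableSpace.comap_mono hφ.comap_le
    have hXmeasG : ∀ i : ℕ, Measurable[⨆ n, 𝔊 n] (X i j) := by
      intro i
      have h1 : Measurable[𝔊 (i+1)] (fun ω => ((fun k : Fin (i+1) => X k j ω),
          (fun p : ℕ × {l : J // l ≠ j} => X p.1 p.2 ω))) := by
        rw [h𝔊 (i+1)]
        exact measurable_iff_comap_le.mpr le_rfl
      have h2 : Measurable[𝔊 (i+1)] (X i j) :=
        (measurable_pi_apply (⟨i, Nat.lt_succ_self i⟩ : Fin (i+1))).comp
          (measurable_fst.comp h1)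
      exact h2.mono (le_iSup 𝔊 (i+1)) le_rfl
    have hswapG : ∀ n m, n ≤ m →
        μ[(fun ω => f (X m j ω)) | 𝔊 n] =ᵐ[μ] μ[(fun ω => f (X n j ω)) | 𝔊 n] := by
      intro n m hnm
      rcases eq_or_lt_of_le hnm with rfl | hlt
      · exact Filter.EventuallyEq.rfl
      set σ : J → Equiv.Perm ℕ := fun i => if i = j then Equiv.swap n m else 1 with hσ
      have harr := hpe σ (hσfin n m)
      set Z : Ω → (Fin n → 𝕏) × (ℕ × {i : J // i ≠ j} → 𝕏) :=
        fun ω => ((fun i : Fin n => X i j ω), fun p => X p.1 p.2 ω) with hZdef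
      have hZ : Measurable Z := Measurable.prodMk
        (measurable_pi_lambda _ fun i => hX i j)
        (measurable_pi_lambda _ fun p => hX p.1 p.2)
      set Φ : ((ℕ × J) → 𝕏) → ((Fin n → 𝕏) × (ℕ × {i : J // i ≠ j} → 𝕏)) × 𝕏 :=
        fun g => (((fun i : Fin n => g (i, j)), fun p => g (p.1, p.2.1)), g (n, j)) with hΦdef
      have hΦ : Measurable Φ := Measurable.prodMk (Measurable.prodMk
        (measurable_pi_lambda _ fun i => measurable_pi_apply _)
        (measurable_pi_lambda _ fun p => measurable_pi_apply _)) (measurable_pi_apply _)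
      have harrm : Measurable (fun ω (p : ℕ × J) => X p.1 p.2 ω) :=
        measurable_pi_lambda _ fun p => hX p.1 p.2
      have hpermm : Measurable (fun ω (p : ℕ × J) => X (σ p.2 p.1) p.2 ω) :=
        measurable_pi_lambda _ fun p => hX _ _
      have hc1 : (fun ω => (Z ω, X n j ω)) = Φ ∘ (fun ω (p : ℕ × J) => X p.1 p.2 ω) := rfl
      have hc2 : (fun ω => (Z ω, X m j ω)) = Φ ∘ (fun ω (p : ℕ × J) => X (σ p.2 p.1) p.2 ω) := by
        funext ω
        simp only [Function.comp_apply, hΦdef, hZdef, Prod.mk.injEq]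
        have hσj : σ j = Equiv.swap n m := if_pos rfl
        refine ⟨⟨funext fun i => ?_, funext fun p => ?_⟩, ?_⟩
        · rw [hσj, Equiv.swap_apply_of_ne_of_ne (Nat.ne_of_lt i.isLt)
            (Nat.ne_of_lt (lt_trans i.isLt hlt))]
        · have : σ (p.2 : J) = 1 := if_neg p.2.2
          rw [this, Equiv.Perm.coe_one, id_eq]
        · rw [hσj, Equiv.swap_apply_left]
      have hmap : Measure.map (fun ω => (Z ω, X m j ω)) μ
          = Measure.map (fun ω => (Z ω, X n j ω)) μ := by
        rw [hc1, hc2, ← Measure.map_map hΦ hpermm, ← Measure.map_map hΦ harrm, harr]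
      have := condexp_comp_eq_of_map_eq μ Z hZ (X m j) (X n j) (hX m j) (hX n j) hmap f
      rw [h𝔊 n]
      exact this
    let ℱ : Filtration ℕ ‹MeasurableSpace Ω› := ⟨𝔊, hGmono, hGle⟩
    exact master_convergence μ (fun n => X n j) (fun n => hX n j) ℱ hXmeasG f hswapG
      (fun ω => ∫ x, f x ∂(F j ω)) hL
  · ------------------------------------------------------------------ ℌ part
    have hHle : ∀ n, ℌ n ≤ ‹MeasurableSpace Ω› := by
      intro n
      rw [hℌ n]
      exact Measurable.comap_le (measurable_pi_lambda _ fun p => hX p.1 p.2)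
    have hHmono : Monotone ℌ := by
      refine monotone_nat_of_le_succ fun n => ?_
      rw [hℌ n, hℌ (n+1)]
      set φ : (Fin (n+1) × J → 𝕏) → (Fin n × J → 𝕏) :=
        fun g p => g (p.1.castSucc, p.2) with hφdef
      have hφ : Measurable φ := measurable_pi_lambda _ fun p => measurable_pi_apply _
      have hcomp : (fun ω => fun p : Fin n × J => X p.1 p.2 ω)
          = φ ∘ (fun ω => fun p : Fin (n+1) × J => X p.1 p.2 ω) := by
        funext ω
        simp only [hφdef, Function.comp_apply, Fin.coe_castSucc]
      rw [hcomp, ← MeasurableSpace.comap_comp]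
      exact MeasurableSpace.comap_mono hφ.comap_le
    have hXmeasH : ∀ i : ℕ, Measurable[⨆ n, ℌ n] (X i j) := by
      intro i
      have h1 : Measurable[ℌ (i+1)] (fun ω => fun p : Fin (i+1) × J => X p.1 p.2 ω) := by
        rw [hℌ (i+1)]
        exact measurable_iff_comap_le.mpr le_rfl
      have h2 : Measurable[ℌ (i+1)] (X i j) :=
        (measurable_pi_apply ((⟨i, Nat.lt_succ_self i⟩ : Fin (i+1)), j)).comp h1
      exact h2.mono (le_iSup ℌ (i+1)) le_rfl
    have hswapH : ∀ n m, n ≤ m →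
        μ[(fun ω => f (X m j ω)) | ℌ n] =ᵐ[μ] μ[(fun ω => f (X n j ω)) | ℌ n] := by
      intro n m hnm
      rcases eq_or_lt_of_le hnm with rfl | hlt
      · exact Filter.EventuallyEq.rfl
      set σ : J → Equiv.Perm ℕ := fun i => if i = j then Equiv.swap n m else 1 with hσ
      have harr := hpe σ (hσfin n m)
      set Z : Ω → (Fin n × J → 𝕏) := fun ω => fun p : Fin n × J => X p.1 p.2 ω with hZdef
      have hZ : Measurable Z := measurable_pi_lambda _ fun p => hX p.1 p.2
      set Φ : ((ℕ × J) → 𝕏) → (Fin n × J → 𝕏) × 𝕏 :=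
        fun g => ((fun p : Fin n × J => g (p.1, p.2)), g (n, j)) with hΦdef
      have hΦ : Measurable Φ := Measurable.prodMk
        (measurable_pi_lambda _ fun p => measurable_pi_apply _) (measurable_pi_apply _)
      have harrm : Measurable (fun ω (p : ℕ × J) => X p.1 p.2 ω) :=
        measurable_pi_lambda _ fun p => hX p.1 p.2
      have hpermm : Measurable (fun ω (p : ℕ × J) => X (σ p.2 p.1) p.2 ω) :=
        measurable_pi_lambda _ fun p => hX _ _
      have hc1 : (fun ω => (Z ω, X n j ω)) = Φ ∘ (fun ω (p : ℕ × J) => X p.1 p.2 ω) := rfl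
      have hc2 : (fun ω => (Z ω, X m j ω)) = Φ ∘ (fun ω (p : ℕ × J) => X (σ p.2 p.1) p.2 ω) := by
        funext ω
        simp only [Function.comp_apply, hΦdef, hZdef, Prod.mk.injEq]
        have hσj : σ j = Equiv.swap n m := if_pos rfl
        refine ⟨funext fun p => ?_, ?_⟩
        · by_cases hp : p.2 = j
          · rw [hp, hσj, Equiv.swap_apply_of_ne_of_ne (Nat.ne_of_lt p.1.isLt)
              (Nat.ne_of_lt (lt_trans p.1.isLt hlt))]
          · have : σ p.2 = 1 := if_neg hp
            rw [this, Equiv.Perm.coe_one, id_eq]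
        · rw [hσj, Equiv.swap_apply_left]
      have hmap : Measure.map (fun ω => (Z ω, X m j ω)) μ
          = Measure.map (fun ω => (Z ω, X n j ω)) μ := by
        rw [hc1, hc2, ← Measure.map_map hΦ hpermm, ← Measure.map_map hΦ harrm, harr]
      have := condexp_comp_eq_of_map_eq μ Z hZ (X m j) (X n j) (hX m j) (hX n j) hmap f
      rw [hℌ n]
      exact this
    let ℱ : Filtration ℕ ‹MeasurableSpace Ω› := ⟨ℌ, hHmono, hHle⟩
    exact master_convergence μ (fun n => X n j) (fun n => hX n j) ℱ hXmeasH f hswapH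
      (fun ω => ∫ x, f x ∂(F j ω)) hL
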